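/- For each k ∈ ℕ, consider a multilayer e-filter setting with null structure (N_k features, M layers, partitions with G_k^(m) groups at layer m, null sets H0,k^(m)) on a probability space, with nonnegative real random e-values e_{g,k}^(m) that are almost surely finite. Suppose that for each m ∈ [M], G_k^(m) → ∞ as k → ∞ and limsup_{k→∞} (1/G_k^(m)) Σ_{g∈H0,k^(m)} E[e_{g,k}^(m)] ≤ 1 (the layer-m e-values are asymptotic relaxed e-values). Let S_k be the output of the generalized e-filter at fixed levels α^(1),…,α^(M) ∈ (0,1) in the k-th setting. Then for every m ∈ [M], limsup_{k→∞} FDR_k^(m) ≤ α^(m). -/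

import Mathlib

open scoped ENNReal
open Filter MeasureTheory

namespace MultilayerEFilter

variable {N M : ℕ} {G : Fin M → ℕ}

/-- Candidate selection set `S(t) = {j : e_{h(m,j)}^(m) ≥ t^(m) for all m}`. -/
noncomputable def sel (h : (m : Fin M) → Fin N → Fin (G m))
    (e : (m : Fin M) → Fin (G m) → ℝ≥0∞) (t : Fin M → ℝ≥0∞) : Finset (Fin N) :=
  Finset.univ.filter fun j => ∀ m, t m ≤ e m (h m j)

/-- Induced group selection `S^(m) = {g : A_g^(m) ∩ S ≠ ∅}`. -/
noncomputable def selGrp (A : (m : Fin M) → Fin (G m) → Finset (Fin N))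
    (S : Finset (Fin N)) (m : Fin M) : Finset (Fin (G m)) :=
  Finset.univ.filter fun g => ∃ j ∈ A m g, j ∈ S

/-- Estimated FDP at layer `m`: `(G^(m)/t^(m)) / (|S^(m)(t)| ∨ 1)` (with `G/∞ = 0`). -/
noncomputable def FDPhat (A : (m : Fin M) → Fin (G m) → Finset (Fin N))
    (h : (m : Fin M) → Fin N → Fin (G m))
    (e : (m : Fin M) → Fin (G m) → ℝ≥0∞) (t : Fin M → ℝ≥0∞) (m : Fin M) : ℝ≥0∞ :=
  ((G m : ℝ≥0∞) / t m) / ((max (selGrp A (sel h e t) m).card 1 : ℕ) : ℝ≥0∞)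

/-- Admissible threshold vectors. -/
noncomputable def admissible (A : (m : Fin M) → Fin (G m) → Finset (Fin N))
    (h : (m : Fin M) → Fin N → Fin (G m))
    (e : (m : Fin M) → Fin (G m) → ℝ≥0∞) (α : Fin M → ℝ) : Set (Fin M → ℝ≥0∞) :=
  {t | (∀ m, 1 ≤ t m) ∧ ∀ m, FDPhat A h e t m ≤ ENNReal.ofReal (α m)}

/-- Threshold of the generalized e-filter: coordinatewise minimum over admissible vectors. -/
noncomputable def filterThreshold (A : (m : Fin M) → Fin (G m) → Finset (Fin N))
    (h : (m : Fin M) → Fin N → Fin (G m))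
    (e : (m : Fin M) → Fin (G m) → ℝ≥0∞) (α : Fin M → ℝ) (m : Fin M) : ℝ≥0∞ :=
  sInf {s | ∃ t ∈ admissible A h e α, t m = s}

/-- Output of the generalized e-filter. -/
noncomputable def output (A : (m : Fin M) → Fin (G m) → Finset (Fin N))
    (h : (m : Fin M) → Fin N → Fin (G m))
    (e : (m : Fin M) → Fin (G m) → ℝ≥0∞) (α : Fin M → ℝ) : Finset (Fin N) :=
  sel h e (filterThreshold A h e α)

/-- Null groups at layer `m`: groups entirely contained in the null feature set. -/
def nullGrp (A : (m : Fin M) → Fin (G m) → Finset (Fin N))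
    (H0 : Finset (Fin N)) (m : Fin M) : Finset (Fin (G m)) :=
  Finset.univ.filter fun g => A m g ⊆ H0

/-- Layer-`m` false discovery proportion of a selected feature set. -/
noncomputable def FDP (A : (m : Fin M) → Fin (G m) → Finset (Fin N))
    (H0 : Finset (Fin N)) (S : Finset (Fin N)) (m : Fin M) : ℝ≥0∞ :=
  ((selGrp A S m ∩ nullGrp A H0 m).card : ℝ≥0∞) /
    ((max (selGrp A S m).card 1 : ℕ) : ℝ≥0∞)

end MultilayerEFilter

namespace MultilayerEFilter

/-!
STATEMENT 8 (third/fourth bullets of Lemma 2.7, asymptotic relaxed e-values).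

Along a sequence of multilayer e-filter settings indexed by `k`, with almost surely
finite e-values, `G_k^(m) → ∞` and
`limsup_k (1/G_k^(m)) Σ_{g∈H0,k^(m)} E[e_{g,k}^(m)] ≤ 1` for each layer, the output
of the generalized e-filter at fixed levels satisfies
`limsup_k FDR_k^(m) ≤ α^(m)` for every `m`.
-/

lemma mem_sel {N M : ℕ} {G : Fin M → ℕ} (h : (m : Fin M) → Fin N → Fin (G m))
    (e : (m : Fin M) → Fin (G m) → ℝ≥0∞) (t : Fin M → ℝ≥0∞) (j : Fin N) :
    j ∈ sel h e t ↔ ∀ m, t m ≤ e m (h m j) := by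
  simp [sel]

lemma mem_selGrp {N M : ℕ} {G : Fin M → ℕ} (A : (m : Fin M) → Fin (G m) → Finset (Fin N))
    (S : Finset (Fin N)) (m : Fin M) (g : Fin (G m)) :
    g ∈ selGrp A S m ↔ ∃ j ∈ A m g, j ∈ S := by
  simp [selGrp]

lemma sel_anti {N M : ℕ} {G : Fin M → ℕ} (h : (m : Fin M) → Fin N → Fin (G m))
    (e : (m : Fin M) → Fin (G m) → ℝ≥0∞) {t t' : Fin M → ℝ≥0∞}
    (ht : ∀ m, t m ≤ t' m) : sel h e t' ⊆ sel h e t := by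
  intro j hj
  rw [mem_sel] at *
  exact fun m => le_trans (ht m) (hj m)

lemma selGrp_mono {N M : ℕ} {G : Fin M → ℕ} (A : (m : Fin M) → Fin (G m) → Finset (Fin N))
    {S S' : Finset (Fin N)} (hSS : S ⊆ S') (m : Fin M) :
    selGrp A S m ⊆ selGrp A S' m := by
  intro g hg
  rw [mem_selGrp] at *
  obtain ⟨j, hjA, hjS⟩ := hg
  exact ⟨j, hjA, hSS hjS⟩

/-- Key deterministic bound: when all e-values are finite, the FDP of the generalized
e-filter output at layer `m` is at most `α^(m)` times the average of the null e-values. -/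
lemma key_FDP_bound {N M : ℕ} {G : Fin M → ℕ}
    (A : (m : Fin M) → Fin (G m) → Finset (Fin N))
    (h : (m : Fin M) → Fin N → Fin (G m))
    (hdisj : ∀ m, ∀ g₁ g₂ : Fin (G m), g₁ ≠ g₂ → Disjoint (A m g₁) (A m g₂))
    (hmem : ∀ m j, j ∈ A m (h m j))
    (H0 : Finset (Fin N))
    (e : (m : Fin M) → Fin (G m) → ℝ≥0∞)
    (hefin : ∀ m g, e m g ≠ ⊤)
    (α : Fin M → ℝ) (m : Fin M) (hα0 : 0 < α m) :
    FDP A H0 (output A h e α) m ≤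
      ENNReal.ofReal (α m) * ((∑ g ∈ nullGrp A H0 m, e m g) / (G m : ℝ≥0∞)) := by
  set tq := filterThreshold A h e α with htqdef
  set a := ENNReal.ofReal (α m) with hadef
  have ha0 : a ≠ 0 := by
    simp only [hadef, ne_eq, ENNReal.ofReal_eq_zero, not_le]
    exact hα0
  have hat : a ≠ ⊤ := ENNReal.ofReal_ne_top
  have hSout : output A h e α = sel h e tq := rfl
  set Sg := selGrp A (sel h e tq) m with hSgdef
  set D := max Sg.card 1 with hDdef
  have hD0 : ((D : ℕ) : ℝ≥0∞) ≠ 0 := by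
    simp [hDdef]
  have hDt : ((D : ℕ) : ℝ≥0∞) ≠ ⊤ := ENNReal.natCast_ne_top _
  rw [FDP, hSout]
  by_cases hGm : G m = 0
  · have hempty : selGrp A (sel h e tq) m ∩ nullGrp A H0 m = ∅ :=
      Finset.eq_empty_of_forall_notMem fun g _ => by have := g.2; omega
    rw [hempty]
    simp
  by_cases htop : tq m = ⊤
  · have hempty : selGrp A (sel h e tq) m ∩ nullGrp A H0 m = ∅ := by
      apply Finset.eq_empty_of_forall_notMem
      intro g hg
      obtain ⟨j, _, hjS⟩ := (mem_selGrp A _ m g).mp (Finset.mem_inter.mp hg).1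
      have := ((mem_sel h e tq j).mp hjS) m
      rw [htop, top_le_iff] at this
      exact hefin m (h m j) this
    rw [hempty]
    simp
  -- main case
  have hG0' : ((G m : ℕ) : ℝ≥0∞) ≠ 0 := by exact_mod_cast hGm
  have hGt : ((G m : ℕ) : ℝ≥0∞) ≠ ⊤ := ENNReal.natCast_ne_top _
  set C := (Sg ∩ nullGrp A H0 m).card with hCdef
  set E0 := ∑ g ∈ nullGrp A H0 m, e m g with hE0def
  -- Step 2: C * tq m ≤ E0
  have step2 : (C : ℝ≥0∞) * tq m ≤ E0 := by
    have h1 : ∀ g ∈ Sg ∩ nullGrp A H0 m, tq m ≤ e m g := by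
      intro g hg
      obtain ⟨j, hjA, hjS⟩ := (mem_selGrp A _ m g).mp (Finset.mem_inter.mp hg).1
      have hgj : h m j = g := by
        by_contra hne
        exact Finset.disjoint_left.mp (hdisj m _ _ hne) (hmem m j) hjA
      have := ((mem_sel h e tq j).mp hjS) m
      rwa [hgj] at this
    calc (C : ℝ≥0∞) * tq m = ∑ _g ∈ Sg ∩ nullGrp A H0 m, tq m := by
          rw [Finset.sum_const, nsmul_eq_mul]
      _ ≤ ∑ g ∈ Sg ∩ nullGrp A H0 m, e m g := Finset.sum_le_sum h1
      _ ≤ E0 := Finset.sum_le_sum_of_subset Finset.inter_subset_right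
  -- Step 3: G ≤ tq m * (a * D)
  have hc0 : a * ((D : ℕ) : ℝ≥0∞) ≠ 0 := mul_ne_zero ha0 hD0
  have hct : a * ((D : ℕ) : ℝ≥0∞) ≠ ⊤ := ENNReal.mul_ne_top hat hDt
  have sub : ∀ s : ℝ≥0∞, tq m < s → ((G m : ℕ) : ℝ≥0∞) ≤ a * ((D : ℕ) : ℝ≥0∞) * s := by
    intro s hs
    have hs' : sInf {x | ∃ t ∈ admissible A h e α, t m = x} < s := hs
    obtain ⟨x, ⟨u, hu, rfl⟩, hxs⟩ := sInf_lt_iff.mp hs'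
    have hu0 : u m ≠ 0 := by
      have := hu.1 m
      intro h0; rw [h0] at this; exact absurd this (by simp)
    have hut : u m ≠ ⊤ := hxs.ne_top
    have htqu : ∀ m', tq m' ≤ u m' := fun m' => sInf_le ⟨u, hu, rfl⟩
    have hsubsel : sel h e u ⊆ sel h e tq := sel_anti h e htqu
    set Du := max (selGrp A (sel h e u) m).card 1 with hDudef
    have hDu0 : ((Du : ℕ) : ℝ≥0∞) ≠ 0 := by simp [hDudef]
    have hDut : ((Du : ℕ) : ℝ≥0∞) ≠ ⊤ := ENNReal.natCast_ne_top _
    have hDuD : ((Du : ℕ) : ℝ≥0∞) ≤ ((D : ℕ) : ℝ≥0∞) := by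
      have : Du ≤ D :=
        max_le_max (Finset.card_le_card (selGrp_mono A hsubsel m)) le_rfl
      exact_mod_cast this
    have hu2 := hu.2 m
    rw [FDPhat, ENNReal.div_le_iff hDu0 hDut, ENNReal.div_le_iff hu0 hut] at hu2
    calc ((G m : ℕ) : ℝ≥0∞) ≤ a * ((Du : ℕ) : ℝ≥0∞) * u m := hu2
      _ ≤ a * ((D : ℕ) : ℝ≥0∞) * s :=
          mul_le_mul' (mul_le_mul_right hDuD a) hxs.le
  have step3 : ((G m : ℕ) : ℝ≥0∞) ≤ tq m * (a * ((D : ℕ) : ℝ≥0∞)) := by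
    rw [← ENNReal.div_le_iff hc0 hct]
    apply le_of_forall_gt_imp_ge_of_dense
    intro s hs
    rw [ENNReal.div_le_iff hc0 hct, mul_comm]
    exact sub s hs
  -- conclude
  have goal2 : (C : ℝ≥0∞) * ((G m : ℕ) : ℝ≥0∞) ≤ a * E0 * ((D : ℕ) : ℝ≥0∞) := by
    calc (C : ℝ≥0∞) * ((G m : ℕ) : ℝ≥0∞)
        ≤ (C : ℝ≥0∞) * (tq m * (a * ((D : ℕ) : ℝ≥0∞))) := mul_le_mul_right step3 _
      _ = ((C : ℝ≥0∞) * tq m) * (a * ((D : ℕ) : ℝ≥0∞)) := by ring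
      _ ≤ E0 * (a * ((D : ℕ) : ℝ≥0∞)) := mul_le_mul_left step2 _
      _ = a * E0 * ((D : ℕ) : ℝ≥0∞) := by ring
  rw [← mul_div_assoc, ENNReal.le_div_iff_mul_le (Or.inl hG0') (Or.inl hGt),
    mul_comm, ← mul_div_assoc, ENNReal.div_le_iff hD0 hDt,
    mul_comm (((G m : ℕ) : ℝ≥0∞))]
  exact goal2

theorem stmt8 (M : ℕ) (hM : 1 ≤ M) (N : ℕ → ℕ) (G : ℕ → Fin M → ℕ)
    (A : (k : ℕ) → (m : Fin M) → Fin (G k m) → Finset (Fin (N k)))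
    (h : (k : ℕ) → (m : Fin M) → Fin (N k) → Fin (G k m))
    (hne : ∀ k m g, (A k m g).Nonempty)
    (hdisj : ∀ k m, ∀ g₁ g₂ : Fin (G k m), g₁ ≠ g₂ → Disjoint (A k m g₁) (A k m g₂))
    (hmem : ∀ k m j, j ∈ A k m (h k m j))
    (H0 : (k : ℕ) → Finset (Fin (N k)))
    (Ω : ℕ → Type) [∀ k, MeasurableSpace (Ω k)]
    (P : (k : ℕ) → Measure (Ω k)) [∀ k, IsProbabilityMeasure (P k)]
    (e : (k : ℕ) → Ω k → (m : Fin M) → Fin (G k m) → ℝ≥0∞)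
    (hmeas : ∀ k m g, Measurable fun ω => e k ω m g)
    (hfin : ∀ k m g, ∀ᵐ ω ∂ P k, e k ω m g ≠ ⊤)
    (hG : ∀ m, Filter.Tendsto (fun k => G k m) Filter.atTop Filter.atTop)
    (hrelax : ∀ m, Filter.limsup (fun k =>
        (∑ g ∈ nullGrp (A k) (H0 k) m, ∫⁻ ω, e k ω m g ∂ P k) / (G k m : ℝ≥0∞))
        Filter.atTop ≤ 1)
    (α : Fin M → ℝ) (hα : ∀ m, α m ∈ Set.Ioo (0 : ℝ) 1) :
    ∀ m, Filter.limsup (fun k =>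
        ∫⁻ ω, FDP (A k) (H0 k) (output (A k) (h k) (e k ω) α) m ∂ P k)
        Filter.atTop ≤ ENNReal.ofReal (α m) := by
  intro m
  set a := ENNReal.ofReal (α m) with hadef
  have ha0 : a ≠ 0 := by
    simp only [hadef, ne_eq, ENNReal.ofReal_eq_zero, not_le]
    exact (hα m).1
  have hat : a ≠ ⊤ := ENNReal.ofReal_ne_top
  set r : ℕ → ℝ≥0∞ := fun k =>
    (∑ g ∈ nullGrp (A k) (H0 k) m, ∫⁻ ω, e k ω m g ∂ P k) / (G k m : ℝ≥0∞) with hrdef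
  have hbd : ∀ k, (∫⁻ ω, FDP (A k) (H0 k) (output (A k) (h k) (e k ω) α) m ∂ P k)
      ≤ a * r k := by
    intro k
    have hae : ∀ᵐ ω ∂ P k, ∀ m' g, e k ω m' g ≠ ⊤ := by
      rw [ae_all_iff]
      intro m'
      rw [ae_all_iff]
      intro g
      exact hfin k m' g
    have hmeasSum : Measurable fun ω => ∑ g ∈ nullGrp (A k) (H0 k) m, e k ω m g :=
      Finset.measurable_sum _ fun g _ => hmeas k m g
    calc (∫⁻ ω, FDP (A k) (H0 k) (output (A k) (h k) (e k ω) α) m ∂ P k)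
        ≤ ∫⁻ ω, a * ((∑ g ∈ nullGrp (A k) (H0 k) m, e k ω m g) / (G k m : ℝ≥0∞)) ∂ P k := by
          apply lintegral_mono_ae
          filter_upwards [hae] with ω hω
          exact key_FDP_bound (A k) (h k) (hdisj k) (hmem k) (H0 k) (e k ω) hω α m (hα m).1
      _ = a * r k := by
          have heq : ∀ ω : Ω k, a * ((∑ g ∈ nullGrp (A k) (H0 k) m, e k ω m g) / (G k m : ℝ≥0∞))
              = (a * ((G k m : ℝ≥0∞))⁻¹) * ∑ g ∈ nullGrp (A k) (H0 k) m, e k ω m g := by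
            intro ω
            rw [div_eq_mul_inv]
            ring
          simp only [heq]
          rw [lintegral_const_mul _ hmeasSum,
            lintegral_finset_sum _ fun g _ => hmeas k m g]
          simp only [hrdef, div_eq_mul_inv]
          ring
  apply ENNReal.le_of_forall_pos_le_add
  intro ε hε _
  have hδ0 : (0 : ℝ≥0∞) < (ε : ℝ≥0∞) / a :=
    ENNReal.div_pos (by exact_mod_cast hε.ne') hat
  have h1lt : (1 : ℝ≥0∞) < 1 + (ε : ℝ≥0∞) / a :=
    ENNReal.lt_add_right ENNReal.one_ne_top hδ0.ne'
  have hev : ∀ᶠ k in atTop, r k < 1 + (ε : ℝ≥0∞) / a :=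
    eventually_lt_of_limsup_lt (lt_of_le_of_lt (hrelax m) h1lt)
  have hev2 : ∀ᶠ k in atTop,
      (∫⁻ ω, FDP (A k) (H0 k) (output (A k) (h k) (e k ω) α) m ∂ P k) ≤ a + ε := by
    filter_upwards [hev] with k hk
    calc (∫⁻ ω, FDP (A k) (H0 k) (output (A k) (h k) (e k ω) α) m ∂ P k)
        ≤ a * r k := hbd k
      _ ≤ a * (1 + (ε : ℝ≥0∞) / a) := mul_le_mul_right hk.le a
      _ = a + a * ((ε : ℝ≥0∞) / a) := by rw [mul_add, mul_one]
      _ = a + ε := by rw [ENNReal.mul_div_cancel ha0 hat]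
  exact limsup_le_of_le (by isBoundedDefault) hev2

end MultilayerEFilter
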